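/- arXiv:2005.13908 — 5 statements merged into one kernel-verified Lean document; each statement's English description precedes it below -/
import Mathlib

section
/- Suppose X is a Markov random field on 𝒢 with strictly positive PMF p_X represented by clique potentials {ψ_C, C∈𝒞}, and suppose the functions g_i are such that for every clique C∈𝒞 and every y∈𝒴, ψ_C(x)=ψ_C(x′) for all x,x′∈g^{-1}(y). Then Y=(g_i(X_i), i∈V) is a Markov random field on 𝒢. -/
open scoped Classical

/-!
Basic framework: tuples of finitely-valued random variables indexed by the
vertex set `Fin N`, joint PMFs as real-valued functions, pushforward
distributions, Shannon entropy, conditional entropy, marginals, and Markov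
random fields on simple graphs.
-/

variable {N : ℕ}

/-- The distribution of the discrete random variable `f` when the underlying
configuration `x` is distributed according to the joint PMF `p`. -/
noncomputable def dist {𝒳 : Fin N → Type*} [∀ i, Fintype (𝒳 i)] {β : Type*}
    (p : (∀ i, 𝒳 i) → ℝ) (f : (∀ i, 𝒳 i) → β) : β → ℝ :=
  fun b => ∑ x : ∀ i, 𝒳 i, if f x = b then p x else 0

/-- Shannon entropy `H(f)` of the random variable `f` under the joint PMF `p`. -/
noncomputable def ent {𝒳 : Fin N → Type*} [∀ i, Fintype (𝒳 i)] {β : Type*} [Fintype β]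
    (p : (∀ i, 𝒳 i) → ℝ) (f : (∀ i, 𝒳 i) → β) : ℝ :=
  ∑ b : β, Real.negMulLog (dist p f b)

/-- Conditional Shannon entropy `H(f | h) := H(f, h) - H(h)`. -/
noncomputable def condEnt {𝒳 : Fin N → Type*} [∀ i, Fintype (𝒳 i)] {β γ : Type*}
    [Fintype β] [Fintype γ]
    (p : (∀ i, 𝒳 i) → ℝ) (f : (∀ i, 𝒳 i) → β) (h : (∀ i, 𝒳 i) → γ) : ℝ :=
  ent p (fun x => (f x, h x)) - ent p h

/-- Restriction of a configuration to the coordinates in `A` (i.e. `x_A`). -/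
def restr {𝒳 : Fin N → Type*} (A : Finset (Fin N)) (x : ∀ i, 𝒳 i) : ∀ i : A, 𝒳 i.1 :=
  fun i => x i.1

/-- The marginal PMF of the coordinates in `A`, evaluated at `x_A`. -/
noncomputable def margin {𝒳 : Fin N → Type*} [∀ i, Fintype (𝒳 i)]
    (p : (∀ i, 𝒳 i) → ℝ) (A : Finset (Fin N)) (x : ∀ i, 𝒳 i) : ℝ :=
  dist p (restr A) (restr A x)

/-- The neighbors `N_i` of vertex `i` in the graph `G`. -/
noncomputable def nbr (G : SimpleGraph (Fin N)) (i : Fin N) : Finset (Fin N) :=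
  Finset.univ.filter (fun j => G.Adj i j)

/-- `p` is (the joint PMF of) a Markov random field on `G`: for every vertex `i`,
the conditional PMF of `X_i` given `X_{V∖{i}}` equals the conditional PMF of `X_i`
given `X_{N_i}`, expressed in cross-multiplied form (conditional independence of
`X_i` and `X_{V∖({i}∪N_i)}` given `X_{N_i}`). -/
def IsMRF {𝒳 : Fin N → Type*} [∀ i, Fintype (𝒳 i)]
    (G : SimpleGraph (Fin N)) (p : (∀ i, 𝒳 i) → ℝ) : Prop :=
  ∀ (i : Fin N) (x : ∀ j, 𝒳 j),
    p x * margin p (nbr G i) x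
      = margin p (Finset.univ.erase i) x * margin p (insert i (nbr G i)) x

/-- Coordinate-wise application of the functions `g_i`: `g(x) = (g_i(x_i), i ∈ V)`. -/
def gmap {𝒳 𝒴 : Fin N → Type*} (g : ∀ i, 𝒳 i → 𝒴 i) (x : ∀ i, 𝒳 i) : ∀ i, 𝒴 i :=
  fun i => g i (x i)

/-- The set `𝒞` of cliques of `G`: subsets all of whose two-element subsets are
edges (this includes all singletons). -/
noncomputable def cliques (G : SimpleGraph (Fin N)) : Finset (Finset (Fin N)) :=
  Finset.univ.filter (fun C => G.IsClique (C : Set (Fin N)))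

/-- `ψ` (a potential defined on all of `𝒳`) depends only on the coordinates in `C`. -/
def localTo {𝒳 : Fin N → Type*} (C : Finset (Fin N)) (ψ : (∀ i, 𝒳 i) → ℝ) : Prop :=
  ∀ x x' : ∀ i, 𝒳 i, (∀ i ∈ C, x i = x' i) → ψ x = ψ x'

/-- The potential `ψ` depends on the coordinate `x_i` only via `y_i = g_i(x_i)`:
changing `x_i` within a preimage `g_i⁻¹(y_i)` does not change the value of `ψ`.
The negation of this is "`ψ` strictly depends on `x_i`". -/
def onlyVia {𝒳 𝒴 : Fin N → Type*} (g : ∀ i, 𝒳 i → 𝒴 i) (i : Fin N)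
    (ψ : (∀ j, 𝒳 j) → ℝ) : Prop :=
  ∀ (x : ∀ j, 𝒳 j) (xi' : 𝒳 i), g i xi' = g i (x i) →
    ψ (Function.update x i xi') = ψ x

lemma margin_eq_sum {𝒴 : Fin N → Type*} [∀ i, Fintype (𝒴 i)]
    (q : (∀ i, 𝒴 i) → ℝ) (A : Finset (Fin N)) (y : ∀ i, 𝒴 i) :
    margin q A y = ∑ z : ∀ i, 𝒴 i, if (∀ j ∈ A, z j = y j) then q z else 0 := by
  unfold margin _root_.dist
  refine Finset.sum_congr rfl fun z _ => ?_
  have h : (restr A z = restr A y) ↔ (∀ j ∈ A, z j = y j) := by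
    simp [restr, funext_iff, Subtype.forall]
  by_cases hc : ∀ j ∈ A, z j = y j <;> simp [h, hc]

lemma key_lemma {𝒴 : Fin N → Type*} [∀ i, Fintype (𝒴 i)]
    (G : SimpleGraph (Fin N)) (q a b : (∀ i, 𝒴 i) → ℝ) (i : Fin N)
    (hq : ∀ y, q y = a y * b y)
    (ha : localTo (insert i (nbr G i)) a)
    (hb : localTo (Finset.univ.erase i) b)
    (y : ∀ j, 𝒴 j) :
    q y * margin q (nbr G i) y
      = margin q (Finset.univ.erase i) y * margin q (insert i (nbr G i)) y := by
  classical
  have hi : i ∉ nbr G i := by simp [nbr]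
  rw [margin_eq_sum, margin_eq_sum, margin_eq_sum, Finset.mul_sum]
  simp only [mul_ite, mul_zero]
  rw [← Finset.sum_filter, ← Finset.sum_filter, ← Finset.sum_filter,
    Finset.sum_mul_sum, ← Finset.sum_product']
  refine Finset.sum_nbij'
    (fun z => (Function.update y i (z i), Function.update z i (y i)))
    (fun p => Function.update p.2 i (p.1 i)) ?_ ?_ ?_ ?_ ?_
  · intro z hz
    simp only [Finset.mem_filter, Finset.mem_univ, true_and] at hz
    simp only [Finset.mem_product, Finset.mem_filter, Finset.mem_univ, true_and]
    refine ⟨fun j hj => ?_, fun j hj => ?_⟩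
    · rcases Finset.mem_erase.mp hj with ⟨hji, -⟩
      rw [Function.update_of_ne hji]
    · rcases Finset.mem_insert.mp hj with rfl | hj
      · simp
      · have hji : j ≠ i := fun h => hi (h ▸ hj)
        rw [Function.update_of_ne hji]
        exact hz j hj
  · intro p hp
    simp only [Finset.mem_product, Finset.mem_filter, Finset.mem_univ, true_and] at hp
    simp only [Finset.mem_filter, Finset.mem_univ, true_and]
    intro j hj
    have hji : j ≠ i := fun h => hi (h ▸ hj)
    rw [Function.update_of_ne hji]
    exact hp.2 j (Finset.mem_insert_of_mem hj)
  · intro z _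
    simp only
    rw [Function.update_self, Function.update_idem, Function.update_eq_self]
  · intro p hp
    simp only [Finset.mem_product, Finset.mem_filter, Finset.mem_univ, true_and] at hp
    simp only [Function.update_self, Function.update_idem]
    have h1 : Function.update y i (p.1 i) = p.1 := by
      funext j
      by_cases hji : j = i
      · subst hji; rw [Function.update_self]
      · rw [Function.update_of_ne hji]
        exact (hp.1 j (Finset.mem_erase.mpr ⟨hji, Finset.mem_univ j⟩)).symm
    have h2 : Function.update p.2 i (y i) = p.2 := by
      rw [← hp.2 i (Finset.mem_insert_self i (nbr G i))]
      exact Function.update_eq_self i p.2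
    rw [h1, h2]
  · intro z hz
    simp only [Finset.mem_filter, Finset.mem_univ, true_and] at hz
    have hav : a (Function.update y i (z i)) = a z := by
      refine ha _ _ fun j hj => ?_
      rcases Finset.mem_insert.mp hj with rfl | hj
      · simp
      · have hji : j ≠ i := fun h => hi (h ▸ hj)
        rw [Function.update_of_ne hji]
        exact (hz j hj).symm
    have hbv : b (Function.update y i (z i)) = b y := by
      refine hb _ _ fun j hj => ?_
      rcases Finset.mem_erase.mp hj with ⟨hji, -⟩
      rw [Function.update_of_ne hji]
    have hau : a (Function.update z i (y i)) = a y := by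
      refine ha _ _ fun j hj => ?_
      rcases Finset.mem_insert.mp hj with rfl | hj
      · simp
      · have hji : j ≠ i := fun h => hi (h ▸ hj)
        rw [Function.update_of_ne hji]
        exact hz j hj
    have hbu : b (Function.update z i (y i)) = b z := by
      refine hb _ _ fun j hj => ?_
      rcases Finset.mem_erase.mp hj with ⟨hji, -⟩
      rw [Function.update_of_ne hji]
    simp only [hq, hav, hbv, hau, hbu]
    ring

/-- If the strictly positive PMF `p_X` of the MRF `X` on `𝒢` is
represented by clique potentials `{ψ_C, C ∈ 𝒞}` and every `ψ_C` is constant on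
every preimage `g⁻¹(y)`, then `Y = (g_i(X_i), i ∈ V)` is a MRF on `𝒢`. -/
theorem lumpable_of_const_on_preimages {𝒳 𝒴 : Fin N → Type*}
    [∀ i, Fintype (𝒳 i)] [∀ i, Fintype (𝒴 i)]
    (G : SimpleGraph (Fin N)) (p : (∀ i, 𝒳 i) → ℝ)
    (hpos : ∀ x, 0 < p x) (hsum : ∑ x : ∀ i, 𝒳 i, p x = 1)
    (ψ : Finset (Fin N) → (∀ i, 𝒳 i) → ℝ)
    (hloc : ∀ C ∈ cliques G, localTo C (ψ C))
    (hfac : ∀ x : ∀ i, 𝒳 i,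
      p x = (∏ C ∈ cliques G, ψ C x) / ∑ x' : ∀ i, 𝒳 i, ∏ C ∈ cliques G, ψ C x')
    (g : ∀ i, 𝒳 i → 𝒴 i) (hsurj : ∀ i, Function.Surjective (g i))
    (hconst : ∀ C ∈ cliques G, ∀ x x' : ∀ i, 𝒳 i,
      gmap g x = gmap g x' → ψ C x = ψ C x') :
    IsMRF G (dist p (gmap g)) := by
  classical
  intro i y0
  have hgsec : ∀ y : ∀ j, 𝒴 j,
      gmap g (fun j => Function.surjInv (hsurj j) (y j)) = y :=
    fun y => funext fun j => Function.surjInv_eq (hsurj j) (y j)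
  -- the lumped potentials and fiber-counting factors
  set φ : Finset (Fin N) → (∀ j, 𝒴 j) → ℝ :=
    fun C y => ψ C (fun j => Function.surjInv (hsurj j) (y j)) with hφ
  set n : ∀ j, 𝒴 j → ℝ := fun j t => ∑ s : 𝒳 j, if g j s = t then (1 : ℝ) else 0
    with hn
  set Z : ℝ := ∑ x' : ∀ j, 𝒳 j, ∏ C ∈ cliques G, ψ C x' with hZ
  -- factorization of the pushforward PMF
  have hq : ∀ y : ∀ j, 𝒴 j,
      _root_.dist p (gmap g) y = ((∏ C ∈ cliques G, φ C y) / Z) * ∏ j, n j (y j) := by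
    intro y
    have h1 : _root_.dist p (gmap g) y
        = ∑ x : ∀ j, 𝒳 j, (if gmap g x = y then (1 : ℝ) else 0)
            * ((∏ C ∈ cliques G, φ C y) / Z) := by
      unfold _root_.dist
      refine Finset.sum_congr rfl fun x _ => ?_
      by_cases hx : gmap g x = y
      · rw [if_pos hx, if_pos hx, one_mul, hfac x]
        congr 1
        refine Finset.prod_congr rfl fun C hC => ?_
        exact hconst C hC x _ (by rw [hx, hgsec])
      · simp [hx]
    rw [h1, ← Finset.sum_mul, mul_comm ((∏ C ∈ cliques G, φ C y) / Z) _]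
    congr 1
    have h2 : ∀ x : ∀ j, 𝒳 j,
        (if gmap g x = y then (1 : ℝ) else 0)
          = ∏ j, if g j (x j) = y j then (1 : ℝ) else 0 := by
      intro x
      rw [Finset.prod_boole]
      have hiff : gmap g x = y ↔ ∀ j ∈ Finset.univ, g j (x j) = y j := by
        simp [gmap, funext_iff]
      by_cases hx : gmap g x = y
      · rw [if_pos hx, if_pos (hiff.mp hx)]
      · rw [if_neg hx, if_neg (fun h => hx (hiff.mpr h))]
    calc ∑ x : ∀ j, 𝒳 j, (if gmap g x = y then (1 : ℝ) else 0)
        = ∑ x : ∀ j, 𝒳 j, ∏ j, if g j (x j) = y j then (1 : ℝ) else 0 :=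
          Finset.sum_congr rfl fun x _ => h2 x
      _ = ∏ j, n j (y j) := by
          simp only [hn]
          rw [Finset.prod_univ_sum, Fintype.piFinset_univ]
  -- the lumped potentials are local to their cliques
  have hφloc : ∀ C ∈ cliques G, ∀ y y' : ∀ j, 𝒴 j,
      (∀ j ∈ C, y j = y' j) → φ C y = φ C y' := by
    intro C hC y y' h
    simp only [hφ]
    refine hloc C hC _ _ fun j hj => ?_
    rw [h j hj]
  have hclique_sub : ∀ C ∈ cliques G, i ∈ C → C ⊆ insert i (nbr G i) := by
    intro C hC hiC j hj
    by_cases hji : j = i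
    · rw [hji]; exact Finset.mem_insert_self i _
    · refine Finset.mem_insert_of_mem ?_
      have hcl : G.IsClique (C : Set (Fin N)) := (Finset.mem_filter.mp hC).2
      have : G.Adj i j := hcl (by exact_mod_cast hiC) (by exact_mod_cast hj)
        (fun h => hji (h.symm))
      simp [nbr, this]
  -- split into a factor local to {i} ∪ N_i and a factor local to V ∖ {i}
  set a : (∀ j, 𝒴 j) → ℝ := fun y =>
    (∏ C ∈ (cliques G).filter (fun C => i ∈ C), φ C y) * n i (y i) with hadef
  set b : (∀ j, 𝒴 j) → ℝ := fun y =>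
    ((∏ C ∈ (cliques G).filter (fun C => ¬ i ∈ C), φ C y) / Z)
      * ∏ j ∈ Finset.univ.erase i, n j (y j) with hbdef
  have hqab : ∀ y, _root_.dist p (gmap g) y = a y * b y := by
    intro y
    rw [hq y, ← Finset.prod_filter_mul_prod_filter_not (cliques G) (fun C => i ∈ C),
      ← Finset.mul_prod_erase Finset.univ (fun j => n j (y j)) (Finset.mem_univ i)]
    simp only [hadef, hbdef]
    ring
  have ha : localTo (insert i (nbr G i)) a := by
    intro y y' h
    simp only [hadef]
    congr 1
    · refine Finset.prod_congr rfl fun C hC => ?_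
      rcases Finset.mem_filter.mp hC with ⟨hC', hiC⟩
      exact hφloc C hC' y y' fun j hj => h j (hclique_sub C hC' hiC hj)
    · rw [h i (Finset.mem_insert_self i _)]
  have hb : localTo (Finset.univ.erase i) b := by
    intro y y' h
    simp only [hbdef]
    congr 1
    · congr 1
      refine Finset.prod_congr rfl fun C hC => ?_
      rcases Finset.mem_filter.mp hC with ⟨hC', hiC⟩
      refine hφloc C hC' y y' fun j hj => ?_
      exact h j (Finset.mem_erase.mpr ⟨fun hji => hiC (hji ▸ hj), Finset.mem_univ j⟩)
    · refine Finset.prod_congr rfl fun j hj => ?_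
      rw [h j hj]
  exact key_lemma G (_root_.dist p (gmap g)) a b i hqab ha hb y0
end

section
/- Suppose X is a Markov random field on 𝒢 with strictly positive PMF p_X represented by clique potentials {ψ_C, C∈𝒞} such that for every vertex i∈V there is at most one clique whose potential may strictly depend on x_i; let C′:V→𝒞 assign to each i this clique (or an arbitrary clique containing i if no potential strictly depends on x_i), and let V_1,…,V_L be the equivalence classes of V under the relation i∼j iff C′(i)=C′(j), writing C′(V_ℓ) for the common value. Then the PMF of Y=(g_i(X_i), i∈V) satisfies Z·p_Y(y) = ∏_{C∈𝒞} U_C(y) for all y∈𝒴, where the functions U_C : 𝒴 → ℝ are well-defined by U_{C′(V_ℓ)}(g(x)) := Σ_{x′_{V_ℓ} ∈ g_{V_ℓ}^{-1}(g_{V_ℓ}(x_{V_ℓ}))} ψ_{C′(V_ℓ)}(x′_{V_ℓ}, x_{V∖V_ℓ}) for ℓ=1,…,L, and U_C(g(x)) := ψ_C(x) for every clique C not in the image of C′. -/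
open scoped Classical

/-!
Basic framework: tuples of finitely-valued random variables indexed by the
vertex set `Fin N`, joint PMFs as real-valued functions, pushforward
distributions, Shannon entropy, conditional entropy, marginals, and Markov
random fields on simple graphs.
-/

variable {N : ℕ}

section Aux
variable {N : ℕ}

lemma agree_aux {𝒳 𝒴 : Fin N → Type*} (g : ∀ i, 𝒳 i → 𝒴 i)
    (ψ : (∀ i, 𝒳 i) → ℝ) (S : Finset (Fin N))
    (hψ : ∀ j ∈ S, onlyVia g j ψ) (x x' : ∀ i, 𝒳 i)
    (hout : ∀ j ∉ S, x j = x' j) (hg : ∀ j ∈ S, g j (x j) = g j (x' j)) :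
    ψ x = ψ x' := by
  induction S using Finset.induction_on generalizing x with
  | empty => exact congrArg ψ (funext fun j => hout j (Finset.notMem_empty j))
  | @insert a s ha ih =>
    have h1 : ψ (Function.update x a (x' a)) = ψ x :=
      hψ a (Finset.mem_insert_self a s) x (x' a) (hg a (Finset.mem_insert_self a s)).symm
    rw [← h1]
    refine ih (fun j hj => hψ j (Finset.mem_insert_of_mem hj)) _ ?_ ?_
    · intro j hj
      by_cases hja : j = a
      · subst hja; simp
      · rw [Function.update_of_ne hja]
        exact hout j (by simp [hja, hj])
    · intro j hj
      have hja : j ≠ a := fun h => ha (h ▸ hj)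
      rw [Function.update_of_ne hja]
      exact hg j (Finset.mem_insert_of_mem hj)

noncomputable def Wfun {𝒳 𝒴 : Fin N → Type*} [∀ i, Fintype (𝒳 i)]
    (g : ∀ i, 𝒳 i → 𝒴 i) (C' : Fin N → Finset (Fin N))
    (ψ : Finset (Fin N) → (∀ i, 𝒳 i) → ℝ) (C : Finset (Fin N)) (x : ∀ i, 𝒳 i) : ℝ :=
  ∑ z : ∀ j, 𝒳 j,
    if (∀ j, C' j = C → g j (z j) = g j (x j)) ∧ (∀ j, C' j ≠ C → z j = x j)
    then ψ C z else 0

lemma Wfun_congr {𝒳 𝒴 : Fin N → Type*} [∀ i, Fintype (𝒳 i)]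
    (g : ∀ i, 𝒳 i → 𝒴 i) (C' : Fin N → Finset (Fin N))
    (ψ : Finset (Fin N) → (∀ i, 𝒳 i) → ℝ) (C : Finset (Fin N))
    (honly : ∀ j, C' j ≠ C → onlyVia g j (ψ C)) (x x' : ∀ i, 𝒳 i)
    (hgg : ∀ j, g j (x j) = g j (x' j)) :
    Wfun g C' ψ C x = Wfun g C' ψ C x' := by
  unfold Wfun
  rw [← Finset.sum_filter, ← Finset.sum_filter]
  refine Finset.sum_nbij' (fun z => fun j => if C' j = C then z j else x' j)
    (fun z => fun j => if C' j = C then z j else x j) ?_ ?_ ?_ ?_ ?_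
  · intro z hz
    rw [Finset.mem_filter] at hz ⊢
    obtain ⟨-, hz1, hz2⟩ := hz
    refine ⟨Finset.mem_univ _, fun j hj => ?_, fun j hj => ?_⟩
    · simp only [if_pos hj]; rw [hz1 j hj, hgg j]
    · simp only [if_neg hj]
  · intro z hz
    rw [Finset.mem_filter] at hz ⊢
    obtain ⟨-, hz1, hz2⟩ := hz
    refine ⟨Finset.mem_univ _, fun j hj => ?_, fun j hj => ?_⟩
    · simp only [if_pos hj]; rw [hz1 j hj, hgg j]
    · simp only [if_neg hj]
  · intro z hz
    rw [Finset.mem_filter] at hz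
    funext j
    by_cases hj : C' j = C
    · simp [hj]
    · simp only [if_neg hj]; exact (hz.2.2 j hj).symm
  · intro z hz
    rw [Finset.mem_filter] at hz
    funext j
    by_cases hj : C' j = C
    · simp [hj]
    · simp only [if_neg hj]; exact (hz.2.2 j hj).symm
  · intro z hz
    rw [Finset.mem_filter] at hz
    refine agree_aux g (ψ C) (Finset.univ.filter (fun j => C' j ≠ C))
      (fun j hj => honly j (Finset.mem_filter.mp hj).2) _ _ ?_ ?_
    · intro j hj
      have hj' : C' j = C := by
        by_contra h; exact hj (Finset.mem_filter.mpr ⟨Finset.mem_univ _, h⟩)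
      simp only [if_pos hj']
    · intro j hj
      have hj' : C' j ≠ C := (Finset.mem_filter.mp hj).2
      simp only [if_neg hj']
      rw [hz.2.2 j hj', hgg j]

lemma key_lemma_s4 {𝒳 𝒴 : Fin N → Type*} [∀ i, Fintype (𝒳 i)]
    (g : ∀ i, 𝒳 i → 𝒴 i) (C' : Fin N → Finset (Fin N))
    (ψ : Finset (Fin N) → (∀ i, 𝒳 i) → ℝ) (x₀ : ∀ i, 𝒳 i)
    (R' : Finset (Finset (Fin N)))
    (honly : ∀ C ∈ R', ∀ j, C' j ≠ C → onlyVia g j (ψ C)) :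
    (∑ x : ∀ i, 𝒳 i,
      if (∀ j, C' j ∈ R' → g j (x j) = g j (x₀ j)) ∧ (∀ j, C' j ∉ R' → x j = x₀ j)
      then ∏ C ∈ R', ψ C x else 0)
      = ∏ C ∈ R', Wfun g C' ψ C x₀ := by
  revert honly
  induction R' using Finset.induction_on with
  | empty =>
    intro honly
    simp only [Finset.prod_empty, Finset.notMem_empty, false_implies, implies_true,
      not_false_iff, true_implies, true_and]
    have h1 : ∀ x : ∀ i, 𝒳 i, (∀ j, x j = x₀ j) ↔ x = x₀ := fun x => funext_iff.symm
    calc (∑ x : ∀ i, 𝒳 i, if (∀ j, x j = x₀ j) then (1:ℝ) else 0)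
        = ∑ x : ∀ i, 𝒳 i, if x = x₀ then (1:ℝ) else 0 :=
          Finset.sum_congr rfl fun x _ => by rw [if_congr (h1 x) rfl rfl]
      _ = 1 := by rw [Finset.sum_ite_eq' Finset.univ x₀ (fun _ => (1:ℝ))]; simp
  | @insert C₀ s hC₀ ih =>
    intro honly
    have honlyC₀ : ∀ j, C' j ≠ C₀ → onlyVia g j (ψ C₀) :=
      fun j hj => honly C₀ (Finset.mem_insert_self _ _) j hj
    have honlys : ∀ C ∈ s, ∀ j, C' j ≠ C → onlyVia g j (ψ C) :=
      fun C hC => honly C (Finset.mem_insert_of_mem hC)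
    rw [← Finset.sum_filter]
    simp only [Finset.prod_insert hC₀]
    calc (∑ x ∈ Finset.univ.filter (fun x : ∀ i, 𝒳 i =>
            (∀ j, C' j ∈ insert C₀ s → g j (x j) = g j (x₀ j))
              ∧ (∀ j, C' j ∉ insert C₀ s → x j = x₀ j)),
            ψ C₀ x * ∏ C ∈ s, ψ C x)
        = ∑ p ∈ (Finset.univ.filter (fun z : ∀ i, 𝒳 i =>
              (∀ j, C' j = C₀ → g j (z j) = g j (x₀ j)) ∧ (∀ j, C' j ≠ C₀ → z j = x₀ j)))
            ×ˢ (Finset.univ.filter (fun x' : ∀ i, 𝒳 i =>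
              (∀ j, C' j ∈ s → g j (x' j) = g j (x₀ j)) ∧ (∀ j, C' j ∉ s → x' j = x₀ j))),
            ψ C₀ p.1 * ∏ C ∈ s, ψ C p.2 := by
          refine Finset.sum_nbij'
            (fun x => (fun j => if C' j = C₀ then x j else x₀ j,
                       fun j => if C' j = C₀ then x₀ j else x j))
            (fun p => fun j => if C' j = C₀ then p.1 j else p.2 j) ?_ ?_ ?_ ?_ ?_
          · intro x hx
            rw [Finset.mem_filter] at hx
            obtain ⟨-, hx1, hx2⟩ := hx
            rw [Finset.mem_product, Finset.mem_filter, Finset.mem_filter]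
            refine ⟨⟨Finset.mem_univ _, fun j hj => ?_, fun j hj => ?_⟩,
                    ⟨Finset.mem_univ _, fun j hj => ?_, fun j hj => ?_⟩⟩
            · simp only [if_pos hj]
              exact hx1 j (hj ▸ Finset.mem_insert_self _ _)
            · simp only [if_neg hj]
            · have hjC₀ : C' j ≠ C₀ := fun h => hC₀ (h ▸ hj)
              simp only [if_neg hjC₀]
              exact hx1 j (Finset.mem_insert_of_mem hj)
            · by_cases hjC₀ : C' j = C₀
              · simp only [if_pos hjC₀]
              · simp only [if_neg hjC₀]
                exact hx2 j (by simp [hjC₀, hj])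
          · intro p hp
            rw [Finset.mem_product, Finset.mem_filter, Finset.mem_filter] at hp
            obtain ⟨⟨-, hp1, hp2⟩, ⟨-, hq1, hq2⟩⟩ := hp
            rw [Finset.mem_filter]
            refine ⟨Finset.mem_univ _, fun j hj => ?_, fun j hj => ?_⟩
            · rcases Finset.mem_insert.mp hj with h | h
              · simp only [if_pos h]; exact hp1 j h
              · have hjC₀ : C' j ≠ C₀ := fun h' => hC₀ (h' ▸ h)
                simp only [if_neg hjC₀]; exact hq1 j h
            · have hjC₀ : C' j ≠ C₀ := fun h => hj (h ▸ Finset.mem_insert_self _ _)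
              have hjs : C' j ∉ s := fun h => hj (Finset.mem_insert_of_mem h)
              simp only [if_neg hjC₀]; exact hq2 j hjs
          · intro x hx
            funext j
            by_cases hj : C' j = C₀ <;> simp [hj]
          · intro p hp
            rw [Finset.mem_product, Finset.mem_filter, Finset.mem_filter] at hp
            obtain ⟨⟨-, hp1, hp2⟩, ⟨-, hq1, hq2⟩⟩ := hp
            refine Prod.ext (funext fun j => ?_) (funext fun j => ?_)
            · by_cases hj : C' j = C₀
              · simp [hj]
              · simp only [if_neg hj]; exact (hp2 j hj).symm
            · by_cases hj : C' j = C₀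
              · simp only [if_pos hj]
                exact (hq2 j (fun h => hC₀ (hj ▸ h))).symm
              · simp only [if_neg hj]
          · intro x hx
            rw [Finset.mem_filter] at hx
            obtain ⟨-, hx1, hx2⟩ := hx
            have e1 : ψ C₀ x = ψ C₀ (fun j => if C' j = C₀ then x j else x₀ j) := by
              refine agree_aux g (ψ C₀) (Finset.univ.filter (fun j => C' j ≠ C₀))
                (fun j hj => honlyC₀ j (Finset.mem_filter.mp hj).2) _ _ ?_ ?_
              · intro j hj
                have hj' : C' j = C₀ := by
                  by_contra h; exact hj (Finset.mem_filter.mpr ⟨Finset.mem_univ _, h⟩)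
                simp only [if_pos hj']
              · intro j hj
                have hj' : C' j ≠ C₀ := (Finset.mem_filter.mp hj).2
                simp only [if_neg hj']
                by_cases hjs : C' j ∈ s
                · exact hx1 j (Finset.mem_insert_of_mem hjs)
                · rw [hx2 j (by simp [hj', hjs])]
            have e2 : ∀ C ∈ s, ψ C x = ψ C (fun j => if C' j = C₀ then x₀ j else x j) := by
              intro C hC
              refine agree_aux g (ψ C) (Finset.univ.filter (fun j => C' j = C₀))
                (fun j hj => honlys C hC j
                  (by rw [(Finset.mem_filter.mp hj).2]; exact fun h => hC₀ (h ▸ hC))) _ _ ?_ ?_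
              · intro j hj
                have hj' : C' j ≠ C₀ := by
                  intro h; exact hj (Finset.mem_filter.mpr ⟨Finset.mem_univ _, h⟩)
                simp only [if_neg hj']
              · intro j hj
                have hj' : C' j = C₀ := (Finset.mem_filter.mp hj).2
                simp only [if_pos hj']
                exact hx1 j (hj' ▸ Finset.mem_insert_self _ _)
            rw [← e1]
            exact congrArg (ψ C₀ x * ·) (Finset.prod_congr rfl e2)
      _ = (∑ z ∈ Finset.univ.filter (fun z : ∀ i, 𝒳 i =>
              (∀ j, C' j = C₀ → g j (z j) = g j (x₀ j)) ∧ (∀ j, C' j ≠ C₀ → z j = x₀ j)),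
              ψ C₀ z)
          * (∑ x' ∈ Finset.univ.filter (fun x' : ∀ i, 𝒳 i =>
              (∀ j, C' j ∈ s → g j (x' j) = g j (x₀ j)) ∧ (∀ j, C' j ∉ s → x' j = x₀ j)),
              ∏ C ∈ s, ψ C x') := by
          rw [Finset.sum_product]
          exact (Finset.sum_mul_sum _ _ (fun z => ψ C₀ z) (fun x' => ∏ C ∈ s, ψ C x')).symm
      _ = Wfun g C' ψ C₀ x₀ * ∏ C ∈ s, Wfun g C' ψ C x₀ := by
          rw [Finset.sum_filter, Finset.sum_filter]
          exact congrArg₂ (· * ·) rfl (ih honlys)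

end Aux

/-- **Proposition 1, factorization part.** Suppose the strictly
positive PMF `p_X` is represented by clique potentials such that for every vertex
`i` at most one clique potential may strictly depend on `x_i`, and `C'` assigns to
each `i` this clique (a clique containing `i`, such that every other clique
potential depends on `x_i` only via `y_i`). With the equivalence classes of
`i ∼ j ↔ C'(i) = C'(j)`, the PMF of `Y` satisfies
`Z · p_Y(y) = ∏_{C ∈ 𝒞} U_C(y)` for well-defined potentials `U_C`, where
`U_{C'(V_ℓ)}(g(x)) = ∑_{x'_{V_ℓ} ∈ g_{V_ℓ}⁻¹(g_{V_ℓ}(x_{V_ℓ}))} ψ_{C'(V_ℓ)}(x'_{V_ℓ}, x_{V∖V_ℓ})`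
(the sum below ranges over configurations `z` agreeing with `x` outside the class
of `i` and with `g_{V_ℓ}(z_{V_ℓ}) = g_{V_ℓ}(x_{V_ℓ})` on the class of `i`), and
`U_C(g(x)) = ψ_C(x)` for every clique `C` not in the image of `C'`. -/
theorem lumped_factorization {𝒳 𝒴 : Fin N → Type*}
    [∀ i, Fintype (𝒳 i)] [∀ i, Fintype (𝒴 i)]
    (G : SimpleGraph (Fin N)) (p : (∀ i, 𝒳 i) → ℝ)
    (hpos : ∀ x, 0 < p x) (hsum : ∑ x : ∀ i, 𝒳 i, p x = 1)
    (ψ : Finset (Fin N) → (∀ i, 𝒳 i) → ℝ)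
    (hloc : ∀ C ∈ cliques G, localTo C (ψ C))
    (hfac : ∀ x : ∀ i, 𝒳 i,
      p x = (∏ C ∈ cliques G, ψ C x) / ∑ x' : ∀ i, 𝒳 i, ∏ C ∈ cliques G, ψ C x')
    (g : ∀ i, 𝒳 i → 𝒴 i) (hsurj : ∀ i, Function.Surjective (g i))
    (C' : Fin N → Finset (Fin N))
    (hC'cl : ∀ i, C' i ∈ cliques G) (hC'mem : ∀ i, i ∈ C' i)
    (hC'only : ∀ i : Fin N, ∀ C ∈ cliques G, C ≠ C' i → onlyVia g i (ψ C)) :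
    ∃ U : Finset (Fin N) → (∀ i, 𝒴 i) → ℝ,
      (∀ (i : Fin N) (x : ∀ j, 𝒳 j),
        U (C' i) (gmap g x)
          = ∑ z : ∀ j, 𝒳 j,
              if (∀ j, C' j = C' i → g j (z j) = g j (x j))
                  ∧ (∀ j, C' j ≠ C' i → z j = x j)
              then ψ (C' i) z else 0)
      ∧ (∀ C ∈ cliques G, C ∉ Set.range C' →
          ∀ x : ∀ j, 𝒳 j, U C (gmap g x) = ψ C x)
      ∧ (∀ y : ∀ i, 𝒴 i,
          (∑ x' : ∀ i, 𝒳 i, ∏ C ∈ cliques G, ψ C x') * dist p (gmap g) y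
            = ∏ C ∈ cliques G, U C y) := by
  have hne : Nonempty (∀ i, 𝒳 i) := by
    by_contra h
    rw [not_nonempty_iff] at h
    rw [Finset.univ_eq_empty, Finset.sum_empty] at hsum
    exact one_ne_zero hsum.symm
  obtain ⟨x00⟩ := hne
  set Z : ℝ := ∑ x' : ∀ i, 𝒳 i, ∏ C ∈ cliques G, ψ C x' with hZdef
  have hZ0 : Z ≠ 0 := by
    intro h
    have h1 := hfac x00
    rw [h, div_zero] at h1
    exact (hpos x00).ne' h1
  have hZp : ∀ x, (∏ C ∈ cliques G, ψ C x) = Z * p x := by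
    intro x
    rw [hfac x]
    field_simp
  let sec : (∀ i, 𝒴 i) → ∀ i, 𝒳 i := fun y i => (hsurj i (y i)).choose
  have hsec : ∀ y, ∀ j, g j (sec y j) = y j := fun y j => (hsurj j (y j)).choose_spec
  set R : Finset (Finset (Fin N)) := Finset.univ.image C' with hR
  have hmemR : ∀ C, C ∈ R ↔ ∃ i, C' i = C := by
    intro C; simp [hR, eq_comm]
  have hRcl : R ⊆ cliques G := by
    intro C hC
    obtain ⟨i, hi⟩ := (hmemR C).mp hC
    exact hi ▸ hC'cl i
  have honlyR : ∀ C ∈ R, ∀ j, C' j ≠ C → onlyVia g j (ψ C) := by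
    intro C hC j hj
    exact hC'only j C (hRcl hC) (Ne.symm hj)
  have hpsi_congr : ∀ C ∈ cliques G, C ∉ R →
      ∀ x x' : ∀ i, 𝒳 i, (∀ j, g j (x j) = g j (x' j)) → ψ C x = ψ C x' := by
    intro C hC hCR x x' hxy
    refine agree_aux g (ψ C) Finset.univ (fun j _ => ?_) x x'
      (fun j hj => absurd (Finset.mem_univ j) hj) (fun j _ => hxy j)
    exact hC'only j C hC (fun h => hCR ((hmemR C).mpr ⟨j, h.symm⟩))
  refine ⟨fun C y => if C ∈ R then Wfun g C' ψ C (sec y) else ψ C (sec y), ?_, ?_, ?_⟩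
  · intro i x
    have hCi : C' i ∈ R := (hmemR _).mpr ⟨i, rfl⟩
    simp only [if_pos hCi]
    have h1 : Wfun g C' ψ (C' i) (sec (gmap g x)) = Wfun g C' ψ (C' i) x :=
      Wfun_congr g C' ψ (C' i) (honlyR _ hCi) (sec (gmap g x)) x
        (fun j => hsec (gmap g x) j)
    rw [h1]
    rfl
  · intro C hC hCrange x
    have hCR : C ∉ R := by
      intro h
      obtain ⟨i, hi⟩ := (hmemR C).mp h
      exact hCrange ⟨i, hi⟩
    simp only [if_neg hCR]
    exact hpsi_congr C hC hCR _ _ (fun j => hsec (gmap g x) j)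
  · intro y
    have hgx₀ : ∀ j, g j (sec y j) = y j := hsec y
    have hsplit : (∏ C ∈ cliques G, if C ∈ R then Wfun g C' ψ C (sec y) else ψ C (sec y))
        = (∏ C ∈ cliques G \ R, ψ C (sec y)) * ∏ C ∈ R, Wfun g C' ψ C (sec y) := by
      rw [← Finset.prod_sdiff hRcl]
      congr 1
      · exact Finset.prod_congr rfl (fun C hC => if_neg (Finset.mem_sdiff.mp hC).2)
      · exact Finset.prod_congr rfl (fun C hC => if_pos hC)
    show Z * dist p (gmap g) y
        = ∏ C ∈ cliques G, if C ∈ R then Wfun g C' ψ C (sec y) else ψ C (sec y)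
    rw [hsplit]
    have hiffy : ∀ x : ∀ i, 𝒳 i, gmap g x = y ↔
        ((∀ j, C' j ∈ R → g j (x j) = g j (sec y j)) ∧ (∀ j, C' j ∉ R → x j = sec y j)) := by
      intro x
      constructor
      · intro hxy
        refine ⟨fun j _ => ?_, fun j hj => absurd ((hmemR _).mpr ⟨j, rfl⟩) hj⟩
        rw [hgx₀ j, ← hxy]
        rfl
      · intro ⟨h1, h2⟩
        funext j
        have := h1 j ((hmemR _).mpr ⟨j, rfl⟩)
        rw [hgx₀ j] at this
        exact this
    calc Z * dist p (gmap g) y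
        = ∑ x : ∀ i, 𝒳 i, if gmap g x = y then Z * p x else 0 := by
          have hd : dist p (gmap g) y = ∑ x : ∀ i, 𝒳 i, if gmap g x = y then p x else 0 :=
            Finset.sum_congr rfl (fun x _ => by by_cases h : gmap g x = y <;> simp [h])
          rw [hd, Finset.mul_sum]
          exact Finset.sum_congr rfl fun x _ => by rw [mul_ite, mul_zero]
      _ = ∑ x : ∀ i, 𝒳 i, if gmap g x = y
            then (∏ C ∈ cliques G \ R, ψ C (sec y)) * ∏ C ∈ R, ψ C x else 0 := by
          refine Finset.sum_congr rfl fun x _ => ?_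
          by_cases hx : gmap g x = y
          · rw [if_pos hx, if_pos hx, ← hZp x, ← Finset.prod_sdiff hRcl]
            congr 1
            refine Finset.prod_congr rfl fun C hC => ?_
            have hCm := Finset.mem_sdiff.mp hC
            refine hpsi_congr C hCm.1 hCm.2 x (sec y) fun j => ?_
            rw [hgx₀ j, ← hx]
            rfl
          · rw [if_neg hx, if_neg hx]
      _ = (∏ C ∈ cliques G \ R, ψ C (sec y))
            * ∑ x : ∀ i, 𝒳 i, if gmap g x = y then ∏ C ∈ R, ψ C x else 0 := by
          rw [Finset.mul_sum]
          exact Finset.sum_congr rfl fun x _ => by rw [mul_ite, mul_zero]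
      _ = (∏ C ∈ cliques G \ R, ψ C (sec y))
            * ∑ x : ∀ i, 𝒳 i, if ((∀ j, C' j ∈ R → g j (x j) = g j (sec y j))
                ∧ (∀ j, C' j ∉ R → x j = sec y j))
              then ∏ C ∈ R, ψ C x else 0 := by
          congr 1
          exact Finset.sum_congr rfl fun x _ => by rw [if_congr (hiffy x) rfl rfl]
      _ = (∏ C ∈ cliques G \ R, ψ C (sec y)) * ∏ C ∈ R, Wfun g C' ψ C (sec y) := by
          rw [key_lemma_s4 g C' ψ (sec y) R honlyR]
end

section
/- Suppose X is a Markov random field on 𝒢 with strictly positive PMF p_X represented by clique potentials {ψ_C, C∈𝒞} such that every potential ψ_C is constant on each preimage g^{-1}(y), y∈𝒴. With V_1,…,V_L the classes of a map C′ assigning to each vertex i an arbitrary clique containing i (constant on each class), the PMF of Y satisfies Z·p_Y(y) = ∏_{C∈𝒞} U_C(y) where U_{C′(V_ℓ)}(g(x)) = |g_{V_ℓ}^{-1}(g_{V_ℓ}(x_{V_ℓ}))| · ψ_{C′(V_ℓ)}(x) for ℓ=1,…,L and U_C(g(x)) = ψ_C(x) for cliques C not in the image of C′; in particular Y is a Markov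 random field on 𝒢. -/
open scoped Classical

/-!
Basic framework: tuples of finitely-valued random variables indexed by the
vertex set `Fin N`, joint PMFs as real-valued functions, pushforward
distributions, Shannon entropy, conditional entropy, marginals, and Markov
random fields on simple graphs.
-/

variable {N : ℕ}

lemma restr_eq_iff {𝒳 : Fin N → Type*} (A : Finset (Fin N)) (x x' : ∀ i, 𝒳 i) :
    restr A x = restr A x' ↔ ∀ j ∈ A, x j = x' j := by
  simp [restr, funext_iff, Subtype.forall]

lemma card_pi_filter {𝒳 : Fin N → Type*} [∀ j, Fintype (𝒳 j)] (Q : ∀ j, 𝒳 j → Prop)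
    [i1 : DecidablePred (fun z : ∀ j, 𝒳 j => ∀ j, Q j (z j))]
    [i2 : ∀ j, DecidablePred (Q j)] :
    (Finset.univ.filter (fun z : ∀ j, 𝒳 j => ∀ j, Q j (z j))).card
      = ∏ j, (Finset.univ.filter (fun xj : 𝒳 j => Q j xj)).card := by
  have e : Finset.univ.filter (fun z : ∀ j, 𝒳 j => ∀ j, Q j (z j))
      = Fintype.piFinset (fun j => Finset.univ.filter (fun xj : 𝒳 j => Q j xj)) := by
    ext z
    simp [Fintype.mem_piFinset]
  rw [e, Fintype.card_piFinset]

lemma sum_update {𝒴 : Fin N → Type*} [∀ j, Fintype (𝒴 j)] (i : Fin N) (c : 𝒴 i)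
    (F : (∀ j, 𝒴 j) → ℝ) :
    ∑ y' : ∀ j, 𝒴 j, F y'
      = ∑ yi' : 𝒴 i, ∑ y' : ∀ j, 𝒴 j,
          (if y' i = c then F (Function.update y' i yi') else 0) := by
  classical
  have h1 : ∀ y' : ∀ j, 𝒴 j, F y' = ∑ yi' : 𝒴 i, if y' i = yi' then F y' else 0 := by
    intro y'; simp
  calc ∑ y' : ∀ j, 𝒴 j, F y'
      = ∑ y' : ∀ j, 𝒴 j, ∑ yi' : 𝒴 i, if y' i = yi' then F y' else 0 := by
        exact Finset.sum_congr rfl (fun y' _ => h1 y')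
    _ = ∑ yi' : 𝒴 i, ∑ y' : ∀ j, 𝒴 j, if y' i = yi' then F y' else 0 := Finset.sum_comm
    _ = ∑ yi' : 𝒴 i, ∑ y' : ∀ j, 𝒴 j, (if y' i = c then F (Function.update y' i yi') else 0) := by
        refine Finset.sum_congr rfl (fun yi' _ => ?_)
        rw [← Finset.sum_filter, ← Finset.sum_filter]
        refine Finset.sum_nbij' (i := fun y' => Function.update y' i c)
          (j := fun y' => Function.update y' i yi') ?_ ?_ ?_ ?_ ?_
        · intro a ha; simp
        · intro a ha; simp
        · intro a ha; simp at ha; simp [Function.update_idem, ha, Function.update_eq_self]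
        · intro a ha; simp at ha; simp [Function.update_idem, ha, Function.update_eq_self]
        · intro a ha; simp at ha
          rw [Function.update_idem]
          congr 1; funext j; rcases eq_or_ne j i with h | h; · subst h; simp [ha]
          · simp [Function.update_of_ne h]

set_option maxHeartbeats 1000000 in
lemma mrf_of_factorization {𝒴 : Fin N → Type*} [∀ j, Fintype (𝒴 j)]
    (G : SimpleGraph (Fin N)) (q : (∀ j, 𝒴 j) → ℝ) (K : ℝ)
    (U : Finset (Fin N) → (∀ j, 𝒴 j) → ℝ)
    (hloc : ∀ C ∈ cliques G, localTo C (U C))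
    (hq : ∀ y, q y = K * ∏ C ∈ cliques G, U C y) : IsMRF G q := by
  classical
  intro i y
  set B : Finset (Fin N) := nbr G i with hB
  have hiB : i ∉ B := by simp [hB, nbr]
  have hBne : ∀ j ∈ B, j ≠ i := by
    intro j hj; rintro rfl; exact hiB hj
  have hsub : ∀ C ∈ cliques G, i ∈ C → ∀ j ∈ C, j = i ∨ j ∈ B := by
    intro C hC hiC j hj
    rcases eq_or_ne j i with h | h
    · exact Or.inl h
    · have hcl : G.IsClique (C : Set (Fin N)) := by
        simpa [cliques] using hC
      have : G.Adj i j := hcl (by simpa using hiC) (by simpa using hj) (Ne.symm h)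
      exact Or.inr (by simp [hB, nbr, this])
  set A : 𝒴 i → ℝ := fun yi =>
    ∏ C ∈ (cliques G).filter (fun C => i ∈ C), U C (Function.update y i yi) with hA
  set b : (∀ j, 𝒴 j) → ℝ := fun y' => ∏ C ∈ (cliques G).filter (fun C => i ∉ C), U C y' with hb
  have key1 : ∀ y' : ∀ j, 𝒴 j, (∀ j ∈ B, y' j = y j) → q y' = K * (A (y' i) * b y') := by
    intro y' hagree
    rw [hq y', ← Finset.prod_filter_mul_prod_filter_not (cliques G) (fun C => i ∈ C)]
    congr 2
    refine Finset.prod_congr rfl (fun C hC => ?_)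
    simp only [Finset.mem_filter] at hC
    refine hloc C hC.1 y' _ (fun j hj => ?_)
    rcases hsub C hC.1 hC.2 j hj with h | h
    · subst h; simp
    · rw [Function.update_of_ne (hBne j h), hagree j h]
  have key2 : ∀ (y' : ∀ j, 𝒴 j) (yi' : 𝒴 i), b (Function.update y' i yi') = b y' := by
    intro y' yi'
    refine Finset.prod_congr rfl (fun C hC => ?_)
    simp only [Finset.mem_filter] at hC
    refine hloc C hC.1 _ y' (fun j hj => ?_)
    have : j ≠ i := fun h => hC.2 (h ▸ hj)
    rw [Function.update_of_ne this]
  have hmarg : ∀ S : Finset (Fin N), margin q S y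
      = ∑ y' : ∀ j, 𝒴 j, if ∀ j ∈ S, y' j = y j then q y' else 0 := by
    intro S
    unfold margin _root_.dist
    simp only [restr_eq_iff]
  set T : ℝ := ∑ y' : ∀ j, 𝒴 j,
      (if ∀ j ∈ insert i B, y' j = y j then b y' else 0) with hT
  set SA : ℝ := ∑ yi' : 𝒴 i, A yi' with hSA
  have hd : q y = K * (A (y i) * b y) := key1 y (fun j _ => rfl)
  have ha : margin q (insert i B) y = K * (A (y i) * T) := by
    rw [hmarg, hT, Finset.mul_sum, Finset.mul_sum]
    refine Finset.sum_congr rfl (fun y' _ => ?_)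
    split_ifs with h
    · rw [key1 y' (fun j hj => h j (Finset.mem_insert_of_mem hj)),
        h i (Finset.mem_insert_self i B)]
    · ring
  have hc : margin q (Finset.univ.erase i) y = K * (SA * b y) := by
    rw [hmarg]
    have step : ∀ y' : ∀ j, 𝒴 j,
        (if ∀ j ∈ Finset.univ.erase i, y' j = y j then q y' else 0)
          = (if ∀ j, j ≠ i → y' j = y j then K * (A (y' i) * b y) else 0) := by
      intro y'
      have e : (∀ j ∈ Finset.univ.erase i, y' j = y j) ↔ (∀ j, j ≠ i → y' j = y j) := by
        simp
      rw [if_congr e rfl rfl]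
      split_ifs with h
      · have hby : b y' = b y := by
          have heq : Function.update y' i (y i) = y := by
            funext j; rcases eq_or_ne j i with hji | hji
            · subst hji; simp
            · simp [Function.update_of_ne hji, h j hji]
          rw [← key2 y' (y i), heq]
        rw [key1 y' (fun j hj => h j (hBne j hj)), hby]
      · rfl
    rw [Finset.sum_congr rfl (fun y' _ => step y'),
      sum_update i (y i) (fun y' => if ∀ j, j ≠ i → y' j = y j then K * (A (y' i) * b y) else 0)]
    have inner : ∀ yi' : 𝒴 i,
        (∑ y' : ∀ j, 𝒴 j, if y' i = y i then
          (if ∀ j, j ≠ i → Function.update y' i yi' j = y j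
            then K * (A (Function.update y' i yi' i) * b y) else 0) else 0)
          = K * (A yi' * b y) := by
      intro yi'
      have this1 : ∀ y' : ∀ j, 𝒴 j,
          (if y' i = y i then
            (if ∀ j, j ≠ i → Function.update y' i yi' j = y j
              then K * (A (Function.update y' i yi' i) * b y) else 0) else 0)
          = (if y' = y then K * (A yi' * b y) else 0) := by
        intro y'
        have hcond : (y' i = y i ∧ ∀ j, j ≠ i → Function.update y' i yi' j = y j) ↔ y' = y := by
          constructor
          · rintro ⟨h1, h2⟩
            funext j; rcases eq_or_ne j i with hji | hji
            · subst hji; exact h1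
            · have := h2 j hji; rwa [Function.update_of_ne hji] at this
          · rintro rfl
            exact ⟨rfl, fun j hji => by rw [Function.update_of_ne hji]⟩
        rw [Function.update_self]
        split_ifs with h1 h2 h3 h4
        · rfl
        · exact absurd (hcond.1 ⟨h1, h2⟩) h3
        · exact absurd (hcond.2 h4).2 h2
        · rfl
        · rename_i h5
          exact absurd (hcond.2 h5).1 h1
        · rfl
      rw [Finset.sum_congr rfl (fun y' _ => this1 y')]
      simp
    rw [Finset.sum_congr rfl (fun yi' _ => inner yi'), hSA, Finset.sum_mul, Finset.mul_sum]
  have hbm : margin q B y = K * (SA * T) := by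
    rw [hmarg]
    have step : ∀ y' : ∀ j, 𝒴 j,
        (if ∀ j ∈ B, y' j = y j then q y' else 0)
          = (if ∀ j ∈ B, y' j = y j then K * (A (y' i) * b y') else 0) := by
      intro y'
      split_ifs with h
      · exact key1 y' h
      · rfl
    rw [Finset.sum_congr rfl (fun y' _ => step y'),
      sum_update i (y i) (fun y' => if ∀ j ∈ B, y' j = y j then K * (A (y' i) * b y') else 0)]
    have inner : ∀ yi' : 𝒴 i,
        (∑ y' : ∀ j, 𝒴 j, if y' i = y i then
          (if ∀ j ∈ B, Function.update y' i yi' j = y j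
            then K * (A (Function.update y' i yi' i) * b (Function.update y' i yi')) else 0) else 0)
          = K * A yi' * T := by
      intro yi'
      rw [hT, Finset.mul_sum]
      refine Finset.sum_congr rfl (fun y' _ => ?_)
      have e1 : (∀ j ∈ B, Function.update y' i yi' j = y j) ↔ (∀ j ∈ B, y' j = y j) := by
        refine forall₂_congr (fun j hj => ?_)
        rw [Function.update_of_ne (hBne j hj)]
      have e2 : (∀ j ∈ insert i B, y' j = y j) ↔ (y' i = y i ∧ ∀ j ∈ B, y' j = y j) := by
        simp [Finset.forall_mem_insert]
      rw [if_congr e1 rfl rfl, if_congr e2 rfl rfl, Function.update_self, key2]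
      by_cases h1 : y' i = y i <;> by_cases h2 : ∀ j ∈ B, y' j = y j <;>
        simp [h1, h2] <;> ring
    rw [Finset.sum_congr rfl (fun yi' _ => inner yi'), hSA, Finset.sum_mul, Finset.mul_sum]
    exact Finset.sum_congr rfl (fun yi' _ => by ring)
  rw [hd, ha, hc, hbm]
  ring
/-- **Corollary.** If every clique potential `ψ_C` is constant on
each preimage `g⁻¹(y)`, then (with `C'` assigning to each vertex `i` an arbitrary
clique containing `i`) the PMF of `Y` satisfies `Z · p_Y(y) = ∏_{C ∈ 𝒞} U_C(y)`
with `U_{C'(V_ℓ)}(g(x)) = |g_{V_ℓ}⁻¹(g_{V_ℓ}(x_{V_ℓ}))| · ψ_{C'(V_ℓ)}(x)` and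
`U_C(g(x)) = ψ_C(x)` for cliques `C` not in the image of `C'`; in particular, `Y`
is a MRF on `𝒢`. -/
theorem lumped_factorization_const {𝒳 𝒴 : Fin N → Type*}
    [∀ i, Fintype (𝒳 i)] [∀ i, Fintype (𝒴 i)]
    (G : SimpleGraph (Fin N)) (p : (∀ i, 𝒳 i) → ℝ)
    (hpos : ∀ x, 0 < p x) (hsum : ∑ x : ∀ i, 𝒳 i, p x = 1)
    (ψ : Finset (Fin N) → (∀ i, 𝒳 i) → ℝ)
    (hloc : ∀ C ∈ cliques G, localTo C (ψ C))
    (hfac : ∀ x : ∀ i, 𝒳 i,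
      p x = (∏ C ∈ cliques G, ψ C x) / ∑ x' : ∀ i, 𝒳 i, ∏ C ∈ cliques G, ψ C x')
    (g : ∀ i, 𝒳 i → 𝒴 i) (hsurj : ∀ i, Function.Surjective (g i))
    (hconst : ∀ C ∈ cliques G, ∀ x x' : ∀ i, 𝒳 i,
      gmap g x = gmap g x' → ψ C x = ψ C x')
    (C' : Fin N → Finset (Fin N))
    (hC'cl : ∀ i, C' i ∈ cliques G) (hC'mem : ∀ i, i ∈ C' i) :
    (∃ U : Finset (Fin N) → (∀ i, 𝒴 i) → ℝ,
      (∀ (i : Fin N) (x : ∀ j, 𝒳 j),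
        U (C' i) (gmap g x)
          = ((Finset.univ.filter (fun z : ∀ j, 𝒳 j =>
                (∀ j, C' j = C' i → g j (z j) = g j (x j))
                  ∧ (∀ j, C' j ≠ C' i → z j = x j))).card : ℝ) * ψ (C' i) x)
      ∧ (∀ C ∈ cliques G, C ∉ Set.range C' →
          ∀ x : ∀ j, 𝒳 j, U C (gmap g x) = ψ C x)
      ∧ (∀ y : ∀ i, 𝒴 i,
          (∑ x' : ∀ i, 𝒳 i, ∏ C ∈ cliques G, ψ C x') * dist p (gmap g) y
            = ∏ C ∈ cliques G, U C y))
    ∧ IsMRF G (dist p (gmap g)) := by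
  classical
  have hZne : (∑ x' : ∀ i, 𝒳 i, ∏ C ∈ cliques G, ψ C x') ≠ 0 := by
    cases isEmpty_or_nonempty (∀ i, 𝒳 i) with
    | inl h => exfalso; rw [Finset.univ_eq_empty] at hsum; simp at hsum
    | inr h =>
      obtain ⟨x0⟩ := h
      intro h0
      have hx0 := hfac x0
      rw [h0, div_zero] at hx0
      exact absurd hx0 (ne_of_gt (hpos x0))
  set Z : ℝ := ∑ x' : ∀ i, 𝒳 i, ∏ C ∈ cliques G, ψ C x' with hZ
  have hZp : ∀ x, Z * p x = ∏ C ∈ cliques G, ψ C x := by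
    intro x; rw [hfac x]; field_simp
  set s : ∀ j, 𝒴 j → 𝒳 j := fun j => Function.surjInv (hsurj j) with hsdef
  have hgs : ∀ j (yj : 𝒴 j), g j (s j yj) = yj := fun j yj => Function.surjInv_eq (hsurj j) yj
  set φ : Finset (Fin N) → (∀ i, 𝒴 i) → ℝ := fun C y => ψ C (fun j => s j (y j)) with hφ
  have hφg : ∀ C ∈ cliques G, ∀ x, φ C (gmap g x) = ψ C x := by
    intro C hC x
    refine hconst C hC _ x ?_
    funext j
    exact hgs j (g j (x j))
  set fib : ∀ j, 𝒴 j → ℕ :=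
    fun j yj => (Finset.univ.filter (fun xj : 𝒳 j => g j xj = yj)).card with hfib
  set U : Finset (Fin N) → (∀ i, 𝒴 i) → ℝ := fun C y =>
    (if C ∈ Set.range C' then
        ∏ j ∈ Finset.univ.filter (fun j => C' j = C), (fib j (y j) : ℝ)
      else 1) * φ C y with hU
  -- condition 1
  have h1 : ∀ (i : Fin N) (x : ∀ j, 𝒳 j),
      U (C' i) (gmap g x)
        = ((Finset.univ.filter (fun z : ∀ j, 𝒳 j =>
              (∀ j, C' j = C' i → g j (z j) = g j (x j))
                ∧ (∀ j, C' j ≠ C' i → z j = x j))).card : ℝ) * ψ (C' i) x := by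
    intro i x
    have hflt : (Finset.univ.filter (fun z : ∀ j, 𝒳 j =>
          (∀ j, C' j = C' i → g j (z j) = g j (x j))
            ∧ (∀ j, C' j ≠ C' i → z j = x j)))
        = Finset.univ.filter (fun z : ∀ j, 𝒳 j => ∀ j,
            (C' j = C' i → g j (z j) = g j (x j)) ∧ (C' j ≠ C' i → z j = x j)) := by
      ext z
      simp only [Finset.mem_filter, Finset.mem_univ, true_and]
      exact ⟨fun h j => ⟨h.1 j, h.2 j⟩, fun h => ⟨fun j => (h j).1, fun j => (h j).2⟩⟩
    have hjcard : ∀ j, (Finset.univ.filter (fun zj : 𝒳 j =>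
        (C' j = C' i → g j zj = g j (x j)) ∧ (C' j ≠ C' i → zj = x j))).card
        = if C' j = C' i then fib j (g j (x j)) else 1 := by
      intro j
      by_cases hji : C' j = C' i
      · rw [if_pos hji, hfib]
        congr 1
        ext zj
        simp [hji]
      · rw [if_neg hji]
        have : (Finset.univ.filter (fun zj : 𝒳 j =>
            (C' j = C' i → g j zj = g j (x j)) ∧ (C' j ≠ C' i → zj = x j)))
            = {x j} := by
          ext zj
          simp [hji]
        rw [this, Finset.card_singleton]
    rw [hflt, card_pi_filter (fun j (zj : 𝒳 j) =>
      (C' j = C' i → g j zj = g j (x j)) ∧ (C' j ≠ C' i → zj = x j))]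
    have hrange : C' i ∈ Set.range C' := ⟨i, rfl⟩
    rw [hU]
    simp only [hrange, if_true]
    rw [hφg (C' i) (hC'cl i) x]
    congr 1
    rw [Finset.prod_congr rfl (fun j _ => hjcard j)]
    push_cast
    rw [← Finset.prod_filter (fun j => C' j = C' i) (fun j => (fib j (g j (x j)) : ℝ))]
    rfl
  -- condition 2
  have h2 : ∀ C ∈ cliques G, C ∉ Set.range C' →
      ∀ x : ∀ j, 𝒳 j, U C (gmap g x) = ψ C x := by
    intro C hC hCr x
    rw [hU]
    simp only [hCr, if_false, one_mul]
    exact hφg C hC x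
  -- condition 3
  have h3 : ∀ y : ∀ i, 𝒴 i,
      Z * dist p (gmap g) y = ∏ C ∈ cliques G, U C y := by
    intro y
    have lhs1 : Z * dist p (gmap g) y
        = ∑ x : ∀ i, 𝒳 i, if gmap g x = y then ∏ C ∈ cliques G, φ C y else 0 := by
      unfold _root_.dist
      rw [Finset.mul_sum]
      refine Finset.sum_congr rfl (fun x _ => ?_)
      rw [mul_ite, mul_zero]
      split_ifs with h
      · rw [hZp x]
        refine Finset.prod_congr rfl (fun C hC => ?_)
        rw [← h, hφg C hC x]
      · rfl
    have lhs2 : (∑ x : ∀ i, 𝒳 i, if gmap g x = y then ∏ C ∈ cliques G, φ C y else 0)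
        = ((Finset.univ.filter (fun x : ∀ i, 𝒳 i => gmap g x = y)).card : ℝ)
            * ∏ C ∈ cliques G, φ C y := by
      rw [← Finset.sum_filter, Finset.sum_const, nsmul_eq_mul]
    have hcardfib : (Finset.univ.filter (fun x : ∀ i, 𝒳 i => gmap g x = y)).card
        = ∏ j, fib j (y j) := by
      have : (Finset.univ.filter (fun x : ∀ i, 𝒳 i => gmap g x = y))
          = Finset.univ.filter (fun x : ∀ i, 𝒳 i => ∀ j, g j (x j) = y j) := by
        ext x
        simp [gmap, funext_iff]
      rw [this, card_pi_filter (fun j (xj : 𝒳 j) => g j xj = y j)]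
    have rhs1 : (∏ C ∈ cliques G, U C y)
        = (∏ C ∈ cliques G,
            ∏ j ∈ Finset.univ.filter (fun j => C' j = C), (fib j (y j) : ℝ))
          * ∏ C ∈ cliques G, φ C y := by
      rw [hU, ← Finset.prod_mul_distrib]
      refine Finset.prod_congr rfl (fun C hC => ?_)
      dsimp only
      congr 1
      split_ifs with h
      · rfl
      · have he : Finset.univ.filter (fun j => C' j = C) = ∅ := by
          ext j
          simp only [Finset.mem_filter, Finset.mem_univ, true_and, Finset.notMem_empty,
            iff_false]
          intro hj
          exact h ⟨j, hj⟩
        rw [he, Finset.prod_empty]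
    have rhs2 : (∏ C ∈ cliques G,
          ∏ j ∈ Finset.univ.filter (fun j => C' j = C), (fib j (y j) : ℝ))
        = ∏ j, (fib j (y j) : ℝ) := by
      exact Finset.prod_fiberwise_of_maps_to (fun j _ => hC'cl j) (fun j => (fib j (y j) : ℝ))
    rw [lhs1, lhs2, hcardfib, rhs1, rhs2]
    push_cast
    ring
  refine ⟨⟨U, h1, h2, fun y => by rw [← h3 y]⟩, ?_⟩
  -- MRF
  have hlocU : ∀ C ∈ cliques G, localTo C (U C) := by
    intro C hC y y' hagree
    rw [hU]
    dsimp only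
    congr 1
    · by_cases h : C ∈ Set.range C'
      · simp only [h, if_true]
        refine Finset.prod_congr rfl (fun j hj => ?_)
        simp only [Finset.mem_filter, Finset.mem_univ, true_and] at hj
        have hjC : j ∈ C := hj ▸ hC'mem j
        rw [hagree j hjC]
      · simp only [h, if_false]
    · refine hloc C hC _ _ (fun j hj => ?_)
      rw [hagree j hj]
  refine mrf_of_factorization G _ Z⁻¹ U hlocU (fun y => ?_)
  rw [← h3 y, inv_mul_cancel_left₀ hZne]
end

section
/- Let X be a Markov random field on 𝒢=(V,E) (with PMF p_X not necessarily strictly positive) and let Y_i=g_i(X_i). If the lumping is information-preserving, i.e., H(Y)=H(X), then for every vertex i∈V, H(X_i | Y_i, X_{N_i}) = 0. -/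
open scoped Classical

/-!
Basic framework: tuples of finitely-valued random variables indexed by the
vertex set `Fin N`, joint PMFs as real-valued functions, pushforward
distributions, Shannon entropy, conditional entropy, marginals, and Markov
random fields on simple graphs.
-/

variable {N : ℕ}

set_option linter.unusedSectionVars false
set_option maxHeartbeats 1000000

section EntropyAux

lemma sum_negMulLog_sub_eq {β : Type*} [Fintype β] (q : β → ℝ) :
    ∑ b, Real.negMulLog (q b) - Real.negMulLog (∑ b, q b)
      = ∑ b, q b * (Real.log (∑ b', q b') - Real.log (q b)) := by
  simp only [Real.negMulLog, mul_sub, Finset.sum_sub_distrib, neg_mul,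
    Finset.sum_neg_distrib, ← Finset.sum_mul]
  ring

lemma term_nonneg {β : Type*} [Fintype β] (q : β → ℝ) (hq : ∀ b, 0 ≤ q b) (b : β) :
    0 ≤ q b * (Real.log (∑ b', q b') - Real.log (q b)) := by
  rcases eq_or_lt_of_le (hq b) with h | h
  · simp [← h]
  · apply mul_nonneg h.le
    have : q b ≤ ∑ b', q b' := Finset.single_le_sum (fun b' _ => hq b') (Finset.mem_univ b)
    linarith [Real.log_le_log h this]

lemma S_nonneg {β : Type*} [Fintype β] (q : β → ℝ) (hq : ∀ b, 0 ≤ q b) :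
    0 ≤ ∑ b, Real.negMulLog (q b) - Real.negMulLog (∑ b, q b) := by
  rw [sum_negMulLog_sub_eq]
  exact Finset.sum_nonneg fun b _ => term_nonneg q hq b

lemma S_eq_zero_unique {β : Type*} [Fintype β] (q : β → ℝ) (hq : ∀ b, 0 ≤ q b)
    (hS : ∑ b, Real.negMulLog (q b) - Real.negMulLog (∑ b, q b) = 0)
    {b b' : β} (hb : 0 < q b) (hb' : 0 < q b') : b = b' := by
  rw [sum_negMulLog_sub_eq] at hS
  have hall := (Finset.sum_eq_zero_iff_of_nonneg
    (fun c _ => term_nonneg q hq c)).1 hS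
  by_contra hne
  have key : ∀ c : β, 0 < q c → q c = ∑ b'', q b'' := by
    intro c hc
    have := hall c (Finset.mem_univ c)
    have hlog : Real.log (∑ b'', q b'') - Real.log (q c) = 0 := by
      rcases mul_eq_zero.1 this with h | h
      · exact absurd h hc.ne'
      · exact h
    have hsum : q c ≤ ∑ b'', q b'' := Finset.single_le_sum (fun b'' _ => hq b'') (Finset.mem_univ c)
    have := Real.log_injOn_pos (Set.mem_Ioi.2 (lt_of_lt_of_le hc hsum)) (Set.mem_Ioi.2 hc)
      (by linarith : Real.log (∑ b'', q b'') = Real.log (q c))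
    exact this.symm
  have h1 := key b hb
  have h2 := key b' hb'
  have : q b + q b' ≤ ∑ b'', q b'' := by
    have := Finset.sum_le_sum_of_subset_of_nonneg (Finset.subset_univ {b, b'})
      (fun c _ _ => hq c)
    rwa [Finset.sum_pair hne] at this
  linarith

lemma S_eq_zero_of_unique {β : Type*} [Fintype β] (q : β → ℝ) (hq : ∀ b, 0 ≤ q b)
    (huniq : ∀ b b' : β, 0 < q b → 0 < q b' → b = b') :
    ∑ b, Real.negMulLog (q b) = Real.negMulLog (∑ b, q b) := by
  by_cases hex : ∃ b0, 0 < q b0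
  · obtain ⟨b0, hb0⟩ := hex
    have hz : ∀ b, b ≠ b0 → q b = 0 := by
      intro b hb
      rcases eq_or_lt_of_le (hq b) with h | h
      · exact h.symm
      · exact absurd (huniq b b0 h hb0) hb
    rw [Finset.sum_eq_single b0 (fun b _ hb => by rw [hz b hb, Real.negMulLog_zero])
        (fun h => absurd (Finset.mem_univ b0) h),
      Finset.sum_eq_single b0 (fun b _ hb => hz b hb)
        (fun h => absurd (Finset.mem_univ b0) h)]
  · push_neg at hex
    have : ∀ b, q b = 0 := fun b => le_antisymm (hex b) (hq b)
    simp [this]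

end EntropyAux

section DistAux

variable {𝒳 : Fin N → Type*} [∀ i, Fintype (𝒳 i)] {β γ : Type*}

lemma dist_nonneg' (p : (∀ i, 𝒳 i) → ℝ) (hnn : ∀ x, 0 ≤ p x) (f : (∀ i, 𝒳 i) → β) (b : β) :
    0 ≤ _root_.dist p f b :=
  Finset.sum_nonneg fun x _ => by split <;> [exact hnn x; exact le_rfl]

lemma le_dist (p : (∀ i, 𝒳 i) → ℝ) (hnn : ∀ x, 0 ≤ p x) (f : (∀ i, 𝒳 i) → β)
    (x : ∀ i, 𝒳 i) : p x ≤ _root_.dist p f (f x) := by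
  have := Finset.single_le_sum (f := fun z => if f z = f x then p z else 0)
    (fun z _ => by split <;> [exact hnn z; exact le_rfl]) (Finset.mem_univ x)
  simpa [_root_.dist] using this

lemma dist_pos_exists (p : (∀ i, 𝒳 i) → ℝ) (f : (∀ i, 𝒳 i) → β) (b : β)
    (hpos : 0 < _root_.dist p f b) : ∃ x, f x = b ∧ 0 < p x := by
  by_contra hc
  push_neg at hc
  have : _root_.dist p f b ≤ 0 := by
    apply Finset.sum_nonpos
    intro x _
    split
    · rename_i hx
      exact hc x hx
    · exact le_rfl
  linarith

variable [Fintype β] [Fintype γ]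

lemma dist_fiber (p : (∀ i, 𝒳 i) → ℝ) (f : (∀ i, 𝒳 i) → β) (h : (∀ i, 𝒳 i) → γ) (c : γ) :
    _root_.dist p h c = ∑ b, _root_.dist p (fun x => (f x, h x)) (b, c) := by
  unfold _root_.dist
  rw [Finset.sum_comm]
  refine Finset.sum_congr rfl fun x _ => ?_
  simp [Prod.ext_iff, ite_and]

lemma condEnt_split (p : (∀ i, 𝒳 i) → ℝ) (f : (∀ i, 𝒳 i) → β) (h : (∀ i, 𝒳 i) → γ) :
    condEnt p f h = ∑ c, (∑ b, Real.negMulLog (_root_.dist p (fun x => (f x, h x)) (b, c))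
      - Real.negMulLog (∑ b, _root_.dist p (fun x => (f x, h x)) (b, c))) := by
  unfold condEnt ent
  rw [Fintype.sum_prod_type_right, Finset.sum_sub_distrib]
  congr 1
  refine Finset.sum_congr rfl fun c _ => ?_
  rw [dist_fiber p f h c]

lemma condEnt_eq_zero_iff (p : (∀ i, 𝒳 i) → ℝ) (hnn : ∀ x, 0 ≤ p x)
    (f : (∀ i, 𝒳 i) → β) (h : (∀ i, 𝒳 i) → γ) :
    condEnt p f h = 0 ↔
      ∀ x x', 0 < p x → 0 < p x' → h x = h x' → f x = f x' := by
  have hsplit := condEnt_split p f h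
  set q : β → γ → ℝ := fun b c => _root_.dist p (fun x => (f x, h x)) (b, c) with hq
  have hqnn : ∀ b c, 0 ≤ q b c := fun b c => dist_nonneg' p hnn _ _
  constructor
  · intro h0 x x' hx hx' hhx
    rw [hsplit] at h0
    have hall := (Finset.sum_eq_zero_iff_of_nonneg
      (fun c _ => S_nonneg (fun b => q b c) (fun b => hqnn b c))).1 h0
    have hSc := hall (h x) (Finset.mem_univ _)
    have h1 : 0 < q (f x) (h x) :=
      lt_of_lt_of_le hx (le_dist p hnn (fun x => (f x, h x)) x)
    have h2 : 0 < q (f x') (h x) := by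
      have := le_dist p hnn (fun x => (f x, h x)) x'
      rw [← hhx] at this
      exact lt_of_lt_of_le hx' this
    exact S_eq_zero_unique (fun b => q b (h x)) (fun b => hqnn b (h x)) hSc h1 h2
  · intro hdet
    rw [hsplit]
    apply Finset.sum_eq_zero
    intro c _
    rw [sub_eq_zero]
    apply S_eq_zero_of_unique (fun b => q b c) (fun b => hqnn b c)
    intro b b' hb hb'
    obtain ⟨x, hx1, hx2⟩ := dist_pos_exists p _ _ hb
    obtain ⟨x', hx1', hx2'⟩ := dist_pos_exists p _ _ hb'
    have hb1 : f x = b := (Prod.ext_iff.1 hx1).1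
    have hc1 : h x = c := (Prod.ext_iff.1 hx1).2
    have hb2 : f x' = b' := (Prod.ext_iff.1 hx1').1
    have hc2 : h x' = c := (Prod.ext_iff.1 hx1').2
    rw [← hb1, ← hb2]
    exact hdet x x' hx2 hx2' (hc1.trans hc2.symm)

lemma dist_id (p : (∀ i, 𝒳 i) → ℝ) (b : ∀ i, 𝒳 i) : _root_.dist p id b = p b := by
  unfold _root_.dist
  simp only [id_eq]
  have h := Finset.sum_ite_eq' (Finset.univ : Finset (∀ i, 𝒳 i)) b p
  simp only [Finset.mem_univ, if_true] at h
  convert h using 2 with x hx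
  by_cases hxb : x = b <;> simp [hxb]

lemma dist_graph (p : (∀ i, 𝒳 i) → ℝ) (k : (∀ i, 𝒳 i) → γ) (b : ∀ i, 𝒳 i) (c : γ) :
    _root_.dist p (fun x => (x, k x)) (b, c) = if k b = c then p b else 0 := by
  unfold _root_.dist
  rw [Finset.sum_eq_single b]
  · simp [Prod.ext_iff]
  · intro z _ hz
    simp [Prod.ext_iff, hz]
  · intro hb
    exact absurd (Finset.mem_univ b) hb

lemma ent_graph (p : (∀ i, 𝒳 i) → ℝ) (k : (∀ i, 𝒳 i) → γ) :
    ent p (fun x => (x, k x)) = ent p id := by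
  unfold ent
  rw [Fintype.sum_prod_type]
  refine Finset.sum_congr rfl fun b _ => ?_
  rw [dist_id]
  rw [Finset.sum_eq_single (k b)]
  · rw [dist_graph]; simp
  · intro c _ hc
    rw [dist_graph, if_neg (fun h => hc h.symm)]
    exact Real.negMulLog_zero
  · intro hb
    exact absurd (Finset.mem_univ _) hb

end DistAux

section MarginAux

variable {𝒳 : Fin N → Type*} [∀ i, Fintype (𝒳 i)]

lemma le_margin (p : (∀ i, 𝒳 i) → ℝ) (hnn : ∀ x, 0 ≤ p x) (A : Finset (Fin N))
    (x : ∀ i, 𝒳 i) : p x ≤ margin p A x :=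
  le_dist p hnn (restr A) x

lemma margin_congr (p : (∀ i, 𝒳 i) → ℝ) (A : Finset (Fin N)) {x y : ∀ i, 𝒳 i}
    (hxy : ∀ j ∈ A, x j = y j) : margin p A x = margin p A y := by
  unfold margin
  congr 1
  funext j
  exact hxy j.1 j.2

end MarginAux

/-- **Proposition 4, necessity.** If `X` is a MRF on `𝒢` (PMF not
necessarily strictly positive) and the lumping is information-preserving, i.e.
`H(Y) = H(X)`, then `H(X_i | Y_i, X_{N_i}) = 0` for every vertex `i`. -/
theorem necessary_infoPreservation {𝒳 𝒴 : Fin N → Type*}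
    [∀ i, Fintype (𝒳 i)] [∀ i, Fintype (𝒴 i)]
    (G : SimpleGraph (Fin N)) (p : (∀ i, 𝒳 i) → ℝ)
    (hnn : ∀ x, 0 ≤ p x) (hsum : ∑ x : ∀ i, 𝒳 i, p x = 1)
    (hMRF : IsMRF G p)
    (g : ∀ i, 𝒳 i → 𝒴 i)
    (hinfo : ent p (gmap g) = ent p id) :
    ∀ i : Fin N,
      condEnt p (fun x => x i) (fun x => (g i (x i), restr (nbr G i) x)) = 0 := by
  -- Step 1: information preservation means `g` is injective on the support of `p`.
  have hdet : ∀ x x', 0 < p x → 0 < p x' → gmap g x = gmap g x' → x = x' := by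
    have h0 : condEnt p id (gmap g) = 0 := by
      unfold condEnt
      rw [show (fun x => (id x, gmap g x)) = (fun x => (x, gmap g x)) from rfl,
        ent_graph p (gmap g), hinfo]
      ring
    exact fun x x' hx hx' hxy =>
      (condEnt_eq_zero_iff p hnn id (gmap g)).1 h0 x x' hx hx' hxy
  intro i
  rw [condEnt_eq_zero_iff p hnn]
  intro x x' hx hx' hh
  obtain ⟨hgix, hres⟩ := Prod.ext_iff.1 hh
  dsimp only at hgix hres
  have hnbr : ∀ j ∈ nbr G i, x j = x' j := fun j hj => congrFun hres ⟨j, hj⟩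
  have hinotnbr : i ∉ nbr G i := by
    simp [nbr, SimpleGraph.irrefl]
  set z := Function.update x i (x' i) with hzdef
  have hzi : z i = x' i := Function.update_self i (x' i) x
  have hzj : ∀ j, j ≠ i → z j = x j := fun j hj => Function.update_of_ne hj (x' i) x
  -- margins of z
  have m1 : margin p (Finset.univ.erase i) z = margin p (Finset.univ.erase i) x :=
    margin_congr p _ (fun j hj => hzj j (Finset.ne_of_mem_erase hj))
  have m2 : margin p (insert i (nbr G i)) z = margin p (insert i (nbr G i)) x' := by
    refine margin_congr p _ (fun j hj => ?_)
    rcases Finset.mem_insert.1 hj with h | h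
    · rw [h, hzi]
    · rw [hzj j (fun hji => hinotnbr (hji ▸ h)), hnbr j h]
  have m3 : margin p (nbr G i) z = margin p (nbr G i) x :=
    margin_congr p _ (fun j hj => hzj j (fun hji => hinotnbr (hji ▸ hj)))
  have hMz := hMRF i z
  rw [m1, m2, m3] at hMz
  have p1 : 0 < margin p (Finset.univ.erase i) x :=
    lt_of_lt_of_le hx (le_margin p hnn _ x)
  have p2 : 0 < margin p (insert i (nbr G i)) x' :=
    lt_of_lt_of_le hx' (le_margin p hnn _ x')
  have p3 : 0 < margin p (nbr G i) x :=
    lt_of_lt_of_le hx (le_margin p hnn _ x)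
  have hpz : 0 < p z := by nlinarith [hnn z, mul_pos p1 p2]
  have hgz : gmap g z = gmap g x := by
    funext j
    by_cases hji : j = i
    · subst hji
      show g j (z j) = g j (x j)
      rw [hzi, hgix]
    · show g j (z j) = g j (x j)
      rw [hzj j hji]
  have := hdet z x hpz hx hgz
  have : z i = x i := congrFun this i
  rw [hzi] at this
  exact this.symm
end

section
/- Let 𝒢=(V,E) be a chordal graph and X a Markov random field on 𝒢 (with PMF p_X not necessarily strictly positive), and let Y_i=g_i(X_i). If there exist a permutation v_1,…,v_N of the vertices such that, with A_{v_i} := N_{v_i} ∩ {v_1,…,v_{i-1}}, one has H(X_{v_i} | Y_{v_i}, X_{A_{v_i}}) = 0 for every i∈{1,…,N}, and this permutation is the one along which H(X) decomposes as Σ_{i=1}^N H(X_{v_i}|X_{A_{v_i}}) (e.g., a maximum cardinality search ordering), then the lumping is information-preserving, i.e., H(Y)=H(X). -/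
open scoped Classical

/-!
Basic framework: tuples of finitely-valued random variables indexed by the
vertex set `Fin N`, joint PMFs as real-valued functions, pushforward
distributions, Shannon entropy, conditional entropy, marginals, and Markov
random fields on simple graphs.
-/

variable {N : ℕ}

/-- `G` is chordal: every induced cycle of `G` has length three, i.e. there is no
induced (embedded) cycle of length at least four. -/
def IsChordal {V : Type*} (G : SimpleGraph V) : Prop :=
  ∀ n : ℕ, 3 < n → IsEmpty (SimpleGraph.cycleGraph n ↪g G)

/-- Given a permutation `v` of the vertices, `A_{v_i} := N_{v_i} ∩ {v_1, …, v_{i-1}}`. -/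
noncomputable def Aset (G : SimpleGraph (Fin N)) (v : Equiv.Perm (Fin N)) (i : Fin N) :
    Finset (Fin N) :=
  nbr G (v i) ∩ (Finset.Iio i).image v

section AuxLemmas

variable {ι : Type*} [Fintype ι]

lemma myCore (a : ι → ℝ) :
    ∑ i, Real.negMulLog (a i) - Real.negMulLog (∑ i, a i)
      = ∑ i, a i * (Real.log (∑ j, a j) - Real.log (a i)) := by
  have h1 : Real.negMulLog (∑ i, a i) = ∑ i, (-(a i * Real.log (∑ j, a j))) := by
    rw [Real.negMulLog, neg_mul, Finset.sum_mul, ← Finset.sum_neg_distrib]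
  rw [h1, ← Finset.sum_sub_distrib]
  apply Finset.sum_congr rfl
  intro i _
  rw [Real.negMulLog]
  ring

lemma myTermNonneg (a : ι → ℝ) (ha : ∀ i, 0 ≤ a i) (i : ι) :
    0 ≤ a i * (Real.log (∑ j, a j) - Real.log (a i)) := by
  rcases eq_or_lt_of_le (ha i) with h | h
  · simp [← h]
  · apply mul_nonneg h.le
    rw [sub_nonneg]
    exact Real.log_le_log h (Finset.single_le_sum (fun j _ => ha j) (Finset.mem_univ i))

lemma myNegMulLogSumLe (a : ι → ℝ) (ha : ∀ i, 0 ≤ a i) :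
    Real.negMulLog (∑ i, a i) ≤ ∑ i, Real.negMulLog (a i) := by
  have := Finset.sum_nonneg (fun i (_ : i ∈ Finset.univ) => myTermNonneg a ha i)
  have h2 := myCore a
  linarith

lemma myEqCase (a : ι → ℝ) (ha : ∀ i, 0 ≤ a i)
    (heq : ∑ i, Real.negMulLog (a i) = Real.negMulLog (∑ i, a i)) :
    ∀ i, a i = 0 ∨ a i = ∑ j, a j := by
  have h0 : ∑ i, a i * (Real.log (∑ j, a j) - Real.log (a i)) = 0 := by
    have h2 := myCore a
    linarith
  have hall := (Finset.sum_eq_zero_iff_of_nonneg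
    (fun i (_ : i ∈ Finset.univ) => myTermNonneg a ha i)).mp h0
  intro i
  rcases eq_or_lt_of_le (ha i) with h | h
  · exact Or.inl h.symm
  · right
    have hi := hall i (Finset.mem_univ i)
    have hne : a i ≠ 0 := ne_of_gt h
    have hlog : Real.log (∑ j, a j) - Real.log (a i) = 0 := by
      rcases mul_eq_zero.mp hi with h' | h'
      · exact absurd h' hne
      · exact h'
    have hS : 0 < ∑ j, a j :=
      lt_of_lt_of_le h (Finset.single_le_sum (fun j _ => ha j) (Finset.mem_univ i))
    have : Real.log (a i) = Real.log (∑ j, a j) := by linarith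
    calc a i = Real.exp (Real.log (a i)) := (Real.exp_log h).symm
      _ = Real.exp (Real.log (∑ j, a j)) := by rw [this]
      _ = ∑ j, a j := Real.exp_log hS

end AuxLemmas

section AuxDist

variable {𝒳 : Fin N → Type*} [∀ i, Fintype (𝒳 i)]

lemma myDistNonneg {β : Type*} (p : (∀ i, 𝒳 i) → ℝ) (hnn : ∀ x, 0 ≤ p x)
    (f : (∀ i, 𝒳 i) → β) (b : β) : 0 ≤ dist p f b := by
  apply Finset.sum_nonneg
  intro x _
  split <;> [exact hnn x; exact le_rfl]

/-- If `f` is injective on the support of `p`, then `H(f) = Σ_x negMulLog (p x)`. -/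
lemma myEntEqSum {β : Type*} [Fintype β] (p : (∀ i, 𝒳 i) → ℝ) (hnn : ∀ x, 0 ≤ p x)
    (f : (∀ i, 𝒳 i) → β)
    (hinj : ∀ x x', 0 < p x → 0 < p x' → f x = f x' → x = x') :
    ent p f = ∑ x : ∀ i, 𝒳 i, Real.negMulLog (p x) := by
  have hb : ∀ b : β, Real.negMulLog (dist p f b)
      = ∑ x : ∀ i, 𝒳 i, (if f x = b then Real.negMulLog (p x) else 0) := by
    intro b
    set a : (∀ i, 𝒳 i) → ℝ := fun x => if f x = b then p x else 0 with ha_def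
    have hann : ∀ x, 0 ≤ a x := by
      intro x; simp only [ha_def]; split <;> [exact hnn x; exact le_rfl]
    have hdist : dist p f b = ∑ x : ∀ i, 𝒳 i, a x := rfl
    by_cases hz : ∀ x, a x = 0
    · have hs : (∑ x : ∀ i, 𝒳 i, a x) = 0 := Finset.sum_eq_zero (fun x _ => hz x)
      rw [hdist, hs, Real.negMulLog_zero]
      symm
      apply Finset.sum_eq_zero
      intro x _
      split
      · next hfx =>
        have := hz x
        simp only [ha_def, if_pos hfx] at this
        rw [this, Real.negMulLog_zero]
      · rfl
    · push_neg at hz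
      obtain ⟨x₀, hx₀⟩ := hz
      have hx₀pos : 0 < a x₀ := lt_of_le_of_ne (hann x₀) (Ne.symm hx₀)
      have hfx₀ : f x₀ = b := by
        by_contra hcon
        simp only [ha_def, if_neg hcon] at hx₀pos
        exact lt_irrefl 0 hx₀pos
      have hpx₀ : 0 < p x₀ := by
        simpa only [ha_def, if_pos hfx₀] using hx₀pos
      have hothers : ∀ x, x ≠ x₀ → a x = 0 := by
        intro x hne
        by_contra hcon
        have hxpos : 0 < a x := lt_of_le_of_ne (hann x) (Ne.symm hcon)
        have hfx : f x = b := by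
          by_contra hcon'
          simp only [ha_def, if_neg hcon'] at hxpos
          exact lt_irrefl 0 hxpos
        have hpx : 0 < p x := by simpa only [ha_def, if_pos hfx] using hxpos
        exact hne (hinj x x₀ hpx hpx₀ (hfx.trans hfx₀.symm))
      have hs : (∑ x : ∀ i, 𝒳 i, a x) = a x₀ :=
        Finset.sum_eq_single x₀ (fun x _ hne => hothers x hne) (fun h => absurd (Finset.mem_univ x₀) h)
      rw [hdist, hs]
      symm
      have : ∀ x, (if f x = b then Real.negMulLog (p x) else 0) = Real.negMulLog (a x) := by
        intro x
        simp only [ha_def]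
        split
        · rfl
        · rw [Real.negMulLog_zero]
      calc ∑ x : ∀ i, 𝒳 i, (if f x = b then Real.negMulLog (p x) else 0)
          = ∑ x : ∀ i, 𝒳 i, Real.negMulLog (a x) := Finset.sum_congr rfl (fun x _ => this x)
        _ = Real.negMulLog (a x₀) := Finset.sum_eq_single x₀
            (fun x _ hne => by rw [hothers x hne, Real.negMulLog_zero])
            (fun h => absurd (Finset.mem_univ x₀) h)
  rw [ent]
  rw [Finset.sum_congr rfl (fun b (_ : b ∈ Finset.univ) => hb b)]
  rw [Finset.sum_comm]
  apply Finset.sum_congr rfl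
  intro x _
  simp

/-- Zero conditional entropy implies determinism on the support. -/
lemma myCondEntZeroDet {β γ : Type*} [Fintype β] [Fintype γ]
    (p : (∀ i, 𝒳 i) → ℝ) (hnn : ∀ x, 0 ≤ p x)
    (f : (∀ i, 𝒳 i) → β) (h : (∀ i, 𝒳 i) → γ)
    (hc : condEnt p f h = 0) :
    ∀ x x', 0 < p x → 0 < p x' → h x = h x' → f x = f x' := by
  set q : β × γ → ℝ := dist p (fun x => (f x, h x)) with hq_def
  have hqnn : ∀ bc, 0 ≤ q bc := fun bc => myDistNonneg p hnn _ bc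
  have hr : ∀ c, dist p h c = ∑ b : β, q (b, c) := by
    intro c
    rw [hq_def]
    unfold _root_.dist
    rw [Finset.sum_comm]
    apply Finset.sum_congr rfl
    intro x _
    simp only [Prod.mk.injEq]
    by_cases hhx : h x = c
    · simp [hhx]
    · simp [hhx]
  have hent1 : ent p (fun x => (f x, h x)) = ∑ c : γ, ∑ b : β, Real.negMulLog (q (b, c)) := by
    rw [ent, ← hq_def, Fintype.sum_prod_type_right]
  have hent2 : ent p h = ∑ c : γ, Real.negMulLog (∑ b : β, q (b, c)) := by
    rw [ent]
    exact Finset.sum_congr rfl (fun c _ => by rw [hr c])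
  have hsum0 : ∑ c : γ, (∑ b : β, Real.negMulLog (q (b, c))
      - Real.negMulLog (∑ b : β, q (b, c))) = 0 := by
    rw [Finset.sum_sub_distrib, ← hent1, ← hent2]
    have := hc
    rw [condEnt] at this
    linarith
  have hterm : ∀ c, ∑ b : β, Real.negMulLog (q (b, c))
      - Real.negMulLog (∑ b : β, q (b, c)) = 0 := by
    intro c
    have hnnc : ∀ c', c' ∈ Finset.univ → (0:ℝ) ≤ ∑ b : β, Real.negMulLog (q (b, c'))
        - Real.negMulLog (∑ b : β, q (b, c')) := by
      intro c' _
      have := myNegMulLogSumLe (fun b => q (b, c')) (fun b => hqnn (b, c'))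
      linarith
    exact (Finset.sum_eq_zero_iff_of_nonneg hnnc).mp hsum0 c (Finset.mem_univ c)
  have hdet : ∀ c b, q (b, c) = 0 ∨ q (b, c) = ∑ b' : β, q (b', c) := by
    intro c
    apply myEqCase (fun b => q (b, c)) (fun b => hqnn (b, c))
    have := hterm c
    linarith
  intro x x' hx hx' hh
  have hqpos : ∀ z, 0 < p z → 0 < q (f z, h z) := by
    intro z hz
    rw [hq_def]
    unfold _root_.dist
    refine lt_of_lt_of_le ?_ (Finset.single_le_sum (fun x _ => ?_) (Finset.mem_univ z))
    · simpa using hz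
    · dsimp only
      split <;> [exact hnn _; exact le_rfl]
  have h1 : 0 < q (f x, h x) := hqpos x hx
  have h2 : 0 < q (f x', h x) := by
    have := hqpos x' hx'
    rwa [← hh] at this
  set c := h x
  have hS : 0 < ∑ b' : β, q (b', c) :=
    lt_of_lt_of_le h1 (Finset.single_le_sum (fun b _ => hqnn (b, c)) (Finset.mem_univ (f x)))
  have e1 : q (f x, c) = ∑ b' : β, q (b', c) := by
    rcases hdet c (f x) with h' | h'
    · exact absurd h' (ne_of_gt h1)
    · exact h'
  have e2 : q (f x', c) = ∑ b' : β, q (b', c) := by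
    rcases hdet c (f x') with h' | h'
    · exact absurd h' (ne_of_gt h2)
    · exact h'
  by_contra hne
  have hpair : q (f x, c) + q (f x', c) ≤ ∑ b' : β, q (b', c) := by
    have hsub := Finset.sum_le_sum_of_subset_of_nonneg
      (Finset.subset_univ ({f x, f x'} : Finset β))
      (fun b _ _ => hqnn (b, c))
    rwa [Finset.sum_pair hne] at hsub
  linarith

end AuxDist

/-- **Proposition 4, sufficiency for chordal graphs.** Let `𝒢` be
chordal, `X` a MRF on `𝒢`, and `Y_i = g_i(X_i)`. If there is a vertex permutation
`v_1, …, v_N` along which the entropy decomposes as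
`H(X) = Σ_i H(X_{v_i} | X_{A_{v_i}})` with `A_{v_i} = N_{v_i} ∩ {v_1,…,v_{i-1}}`
(e.g. a maximum cardinality search ordering), and
`H(X_{v_i} | Y_{v_i}, X_{A_{v_i}}) = 0` for every `i`, then the lumping is
information-preserving: `H(Y) = H(X)`. -/
theorem sufficient_infoPreservation_chordal {𝒳 𝒴 : Fin N → Type*}
    [∀ i, Fintype (𝒳 i)] [∀ i, Fintype (𝒴 i)]
    (G : SimpleGraph (Fin N)) (hchordal : IsChordal G)
    (p : (∀ i, 𝒳 i) → ℝ)
    (hnn : ∀ x, 0 ≤ p x) (hsum : ∑ x : ∀ i, 𝒳 i, p x = 1)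
    (hMRF : IsMRF G p)
    (g : ∀ i, 𝒳 i → 𝒴 i)
    (v : Equiv.Perm (Fin N))
    (hdecomp : ent p id
      = ∑ i : Fin N, condEnt p (fun x => x (v i)) (restr (Aset G v i)))
    (hzero : ∀ i : Fin N,
      condEnt p (fun x => x (v i))
        (fun x => (g (v i) (x (v i)), restr (Aset G v i) x)) = 0) :
    ent p (gmap g) = ent p id := by
  have keyAux : ∀ (n : ℕ) (i : Fin N), i.val < n → ∀ x x', 0 < p x → 0 < p x' →
      gmap g x = gmap g x' → x (v i) = x' (v i) := by
    intro n
    induction n with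
    | zero => intro i hi; exact absurd hi (Nat.not_lt_zero _)
    | succ n ihn =>
      intro i hi x x' hx hx' hg
      have ih : ∀ k : Fin N, k < i → ∀ x x', 0 < p x → 0 < p x' →
          gmap g x = gmap g x' → x (v k) = x' (v k) := by
        intro k hk
        exact ihn k (lt_of_lt_of_le (Fin.lt_def.mp hk) (Nat.lt_succ_iff.mp hi))
      apply myCondEntZeroDet p hnn _ _ (hzero i) x x' hx hx'
      refine Prod.ext ?_ ?_
      · exact congrFun hg (v i)
      · funext j
        obtain ⟨j, hj⟩ := j
        have hj' := hj
        rw [Aset, Finset.mem_inter, Finset.mem_image] at hj'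
        obtain ⟨-, k, hk, hkj⟩ := hj'
        rw [Finset.mem_Iio] at hk
        show x j = x' j
        rw [← hkj]
        exact ih k hk x x' hx hx' hg
  have key : ∀ i : Fin N, ∀ x x', 0 < p x → 0 < p x' →
      gmap g x = gmap g x' → x (v i) = x' (v i) :=
    fun i => keyAux (i.val + 1) i (Nat.lt_succ_self _)
  have hinj : ∀ x x', 0 < p x → 0 < p x' → gmap g x = gmap g x' → x = x' := by
    intro x x' hx hx' hg
    funext k
    have := key (v.symm k) x x' hx hx' hg
    rwa [Equiv.apply_symm_apply] at this
  rw [myEntEqSum p hnn (gmap g) hinj,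
    myEntEqSum p hnn id (fun x x' _ _ e => e)]
end
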